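/- Let m ≥ 1 and d ≥ 1 be integers with d < (2m+1)², and let −1 ≤ a < b < 1 satisfy a + b ≥ 0 and (2 − a − b)/(b − a) > 2m + 1. If v_1, …, v_n are unit vectors in ℝ^d such that ⟨v_i, v_j⟩ ∈ {a, b} for all i ≠ j, then n ≤ 4·d·m·(m+1)/((2m+1)² − d). -/

import Mathlib

open Finset

private lemma swap2 {ι κ : Type*} [Fintype ι] [Fintype κ] (f : ι → κ → ℝ) (g : ι → ℝ) :
    ∑ i, ∑ j, (∑ x, f i x * f j x) * (g i * g j) = ∑ x, (∑ i, g i * f i x)^2 := by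
  calc ∑ i, ∑ j, (∑ x, f i x * f j x) * (g i * g j)
      = ∑ i, ∑ j, ∑ x, (g i * f i x) * (g j * f j x) := by
        refine Finset.sum_congr rfl fun i _ => Finset.sum_congr rfl fun j _ => ?_
        rw [Finset.sum_mul]
        exact Finset.sum_congr rfl fun x _ => by ring
    _ = ∑ x, ∑ i, ∑ j, (g i * f i x) * (g j * f j x) := by
        conv_lhs => enter [2, i]; rw [Finset.sum_comm]
        rw [Finset.sum_comm]
    _ = ∑ x, (∑ i, g i * f i x)^2 := by
        simp only [sq, Finset.sum_mul_sum]

private lemma swap4 {ι κ : Type*} [Fintype ι] [Fintype κ] (f : ι → κ → ℝ) :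
    ∑ i, ∑ j, (∑ x, f i x * f j x)^2 = ∑ x, ∑ y, (∑ i, f i x * f i y)^2 := by
  calc ∑ i, ∑ j, (∑ x, f i x * f j x)^2
      = ∑ i, ∑ j, ∑ x, ∑ y, (f i x * f j x) * (f i y * f j y) := by
        simp only [sq, Finset.sum_mul_sum]
    _ = ∑ x, ∑ y, ∑ i, ∑ j, (f i x * f i y) * (f j x * f j y) := by
        conv_lhs => enter [2, i]; rw [Finset.sum_comm]
        rw [Finset.sum_comm]
        conv_lhs => enter [2, x, 2, i]; rw [Finset.sum_comm]
        conv_lhs => enter [2, x]; rw [Finset.sum_comm]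
        refine Finset.sum_congr rfl fun x _ => Finset.sum_congr rfl fun y _ =>
          Finset.sum_congr rfl fun i _ => Finset.sum_congr rfl fun j _ => by ring
    _ = ∑ x, ∑ y, (∑ i, f i x * f i y)^2 := by
        simp only [sq, Finset.sum_mul_sum]

set_option maxHeartbeats 2000000 in
/-- for a spherical two-distance set with `a + b ≥ 0`,
`(2−a−b)/(b−a) > 2m+1` and `d < (2m+1)²`, one has `n ≤ 4dm(m+1)/((2m+1)² − d)`. -/
theorem stmt12 (m d n : ℕ) (hm : 1 ≤ m) (hd : 1 ≤ d) (hdm : d < (2 * m + 1) ^ 2)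
    (a b : ℝ) (ha : -1 ≤ a) (hab : a < b) (hb : b < 1) (hsum : 0 ≤ a + b)
    (hγ : (2 - a - b) / (b - a) > 2 * (m : ℝ) + 1)
    (v : Fin n → EuclideanSpace ℝ (Fin d))
    (hunit : ∀ i, ‖v i‖ = 1)
    (hinner : ∀ i j, i ≠ j →
      (inner ℝ (v i) (v j) : ℝ) = a ∨ (inner ℝ (v i) (v j) : ℝ) = b) :
    (n : ℝ) ≤ 4 * (d : ℝ) * (m : ℝ) * ((m : ℝ) + 1) /
      ((2 * (m : ℝ) + 1) ^ 2 - (d : ℝ)) := by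
  classical
  have hba : (0:ℝ) < b - a := sub_pos.mpr hab
  set K : ℝ := 2 * (m:ℝ) + 1 with hKdef
  have hm1 : (1:ℝ) ≤ (m:ℝ) := by exact_mod_cast hm
  have hK3 : (3:ℝ) ≤ K := by rw [hKdef]; linarith
  have hD1 : (1:ℝ) ≤ (d:ℝ) := by exact_mod_cast hd
  have hDK : (d:ℝ) < K^2 := by
    have h : (d:ℝ) < ((2*m+1 : ℕ) : ℝ)^2 := by exact_mod_cast hdm
    rw [hKdef]; push_cast at h ⊢; linarith
  have hKD : (0:ℝ) < K^2 - (d:ℝ) := by linarith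
  have hnum : 4 * (d:ℝ) * (m:ℝ) * ((m:ℝ)+1) = (d:ℝ) * (K^2 - 1) := by rw [hKdef]; ring
  rw [hnum, le_div_iff₀ hKD]
  rcases Nat.eq_zero_or_pos n with hn0 | hn0
  · subst hn0
    have hnn : (0:ℝ) ≤ (d:ℝ)*(K^2-1) :=
      mul_nonneg (by linarith only [hD1]) (by nlinarith only [hK3])
    push_cast
    linarith only [hnn]
  have hN : (0:ℝ) < (n:ℝ) := by exact_mod_cast hn0
  have hUE : K * (b - a) < 2 - a - b := (lt_div_iff₀ hba).mp hγ
  -- the key intermediate inequality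
  suffices KEY : (n:ℝ) * ((2-a-b)^2 - (d:ℝ)*(b-a)^2) ≤ (d:ℝ) * ((2-a-b)^2 - (b-a)^2) by
    have hKE : (0:ℝ) < K*(b-a) := mul_pos (by linarith) hba
    have hB : (0:ℝ) < 2 - a - b := by linarith only [hUE, hKE]
    have hu2 : K^2*(b-a)^2 < (2-a-b)^2 := by
      have hp := mul_pos (sub_pos.mpr hUE) (by linarith : (0:ℝ) < 2 - a - b + K*(b-a))
      nlinarith only [hp]
    have hDe : (d:ℝ)*(b-a)^2 < (2-a-b)^2 := by
      have h8 := mul_le_mul_of_nonneg_right (le_of_lt hDK) (sq_nonneg (b-a))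
      linarith only [h8, hu2]
    have step : ((n:ℝ) * (K^2 - (d:ℝ))) * ((2-a-b)^2 - (d:ℝ)*(b-a)^2)
        ≤ ((d:ℝ) * (K^2 - 1)) * ((2-a-b)^2 - (d:ℝ)*(b-a)^2) := by
      have t1 := mul_le_mul_of_nonneg_left KEY (le_of_lt hKD)
      have t2 : (0:ℝ) ≤ (d:ℝ)*(((d:ℝ)-1)*((2-a-b)^2 - K^2*(b-a)^2)) :=
        mul_nonneg (by linarith) (mul_nonneg (by linarith) (by linarith))
      have hidS : ((d:ℝ)*(K^2-1))*((2-a-b)^2 - (d:ℝ)*(b-a)^2)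
          - (K^2-(d:ℝ))*((d:ℝ)*((2-a-b)^2-(b-a)^2))
          = (d:ℝ)*(((d:ℝ)-1)*((2-a-b)^2 - K^2*(b-a)^2)) := by ring
      linarith only [t1, t2, hidS]
    exact le_of_mul_le_mul_right step (by linarith only [hDe])
  -- Gram quantities
  set G : Fin n → Fin n → ℝ := fun i j => ∑ x, v i x * v j x with hGdef
  have hGinner : ∀ i j, (inner ℝ (v i) (v j) : ℝ) = G i j := by
    intro i j
    simp [hGdef, PiLp.inner_apply, RCLike.inner_apply, mul_comm]
  have hGdiag : ∀ i, G i i = 1 := by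
    intro i
    have h1 := real_inner_self_eq_norm_sq (v i)
    rw [hunit i] at h1
    rw [← hGinner]; simpa using h1
  have hGoff : ∀ i j, i ≠ j → G i j = a ∨ G i j = b := by
    intro i j hij
    rcases hinner i j hij with h | h
    · left; rw [← hGinner]; exact h
    · right; rw [← hGinner]; exact h
  have hGle1 : ∀ i j, G i j ≤ 1 := by
    intro i j
    by_cases hij : i = j
    · subst hij; rw [hGdiag]
    · rcases hGoff i j hij with h | h <;> rw [h] <;> linarith
  set w : Fin d → ℝ := fun x => ∑ i, v i x with hwdef
  set s : ℝ := ∑ x, (w x)^2 with hsdef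
  have hs0 : (0:ℝ) ≤ s := Finset.sum_nonneg fun x _ => sq_nonneg _
  set p : Fin n → ℝ := fun i => ∑ x, v i x * w x with hpdef
  set Rq : ℝ := ∑ i, (p i)^2 with hRdef
  set T : ℝ := ∑ i, ∑ j, (G i j)^2 with hTdef
  have hGsum : ∑ i, ∑ j, G i j = s := by
    rw [hsdef]
    simp only [hGdef, hwdef]
    simpa using swap2 (fun i x => v i x) (fun _ => (1:ℝ))
  have hpsum : ∑ i, p i = s := by
    rw [hsdef]
    simp only [hpdef]
    rw [Finset.sum_comm]
    refine Finset.sum_congr rfl fun x _ => ?_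
    rw [← Finset.sum_mul, sq]
  have hpx : ∀ i, p i = ∑ x, v i x * w x := fun _ => rfl
  have hGx : ∀ i j, G i j = ∑ x, v i x * v j x := fun _ _ => rfl
  have hT : T = (n:ℝ)*(1-a)*(1-b) + (a+b)*s - a*b*(n:ℝ)^2 := by
    have hdiagid : ∀ i : Fin n, ∑ j, (G i j - a)*(G i j - b) = (1-a)*(1-b) := by
      intro i
      rw [Finset.sum_eq_single i]
      · rw [hGdiag i]
      · intro j _ hji
        rcases hGoff i j (Ne.symm hji) with h | h <;> rw [h] <;> ring
      · intro h; exact absurd (Finset.mem_univ i) h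
    have h1 : ∑ i, ∑ j, (G i j - a)*(G i j - b) = (n:ℝ)*((1-a)*(1-b)) := by
      rw [Finset.sum_congr rfl fun i _ => hdiagid i]
      simp [Finset.card_univ]
    have h2 : ∑ i, ∑ j, (G i j - a)*(G i j - b)
        = T - (a+b)*s + a*b*(n:ℝ)^2 := by
      rw [hTdef, ← hGsum]
      simp only [Finset.mul_sum]
      rw [← Finset.sum_sub_distrib]
      have hc : ∀ i : Fin n, ∑ j, (G i j - a)*(G i j - b)
          = (∑ j, (G i j)^2) - (∑ j, (a+b)*G i j) + (n:ℝ)*(a*b) := by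
        intro i
        rw [← Finset.sum_sub_distrib]
        have : ∑ j : Fin n, (a*b : ℝ) = (n:ℝ)*(a*b) := by simp [Finset.card_univ]
        rw [← this, ← Finset.sum_add_distrib]
        exact Finset.sum_congr rfl fun j _ => by ring
      rw [Finset.sum_congr rfl fun i _ => hc i]
      simp only [Finset.sum_add_distrib, Finset.sum_sub_distrib, Finset.sum_const,
        Finset.card_univ, Fintype.card_fin, nsmul_eq_mul]
      ring
    rw [h2] at h1
    linarith
  have hsN2 : s ≤ (n:ℝ)^2 := by
    rw [← hGsum]
    calc ∑ i, ∑ j, G i j ≤ ∑ i : Fin n, ∑ j : Fin n, (1:ℝ) := by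
          refine Finset.sum_le_sum fun i _ => Finset.sum_le_sum fun j _ => hGle1 i j
      _ = (n:ℝ)^2 := by simp [Finset.card_univ]; ring
  have hCS1 : (n:ℝ)^2 ≤ (d:ℝ) * T := by
    have hWdiag : ∑ x, (∑ i, v i x * v i x) = (n:ℝ) := by
      rw [Finset.sum_comm]
      have : ∀ i : Fin n, ∑ x, v i x * v i x = 1 := fun i => by
        have := hGdiag i; rw [hGdef] at this; exact this
      rw [Finset.sum_congr rfl fun i _ => this i]
      simp [Finset.card_univ]
    have hcs := Finset.sum_mul_sq_le_sq_mul_sq Finset.univ (fun _ : Fin d => (1:ℝ))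
      (fun x => ∑ i, v i x * v i x)
    simp only [one_mul, one_pow] at hcs
    have hdd : ∑ x : Fin d, (1:ℝ) = (d:ℝ) := by simp [Finset.card_univ]
    rw [hWdiag, hdd] at hcs
    have hmono : ∑ x, (∑ i, v i x * v i x)^2 ≤ ∑ x, ∑ y, (∑ i, v i x * v i y)^2 := by
      refine Finset.sum_le_sum fun x _ => ?_
      exact Finset.single_le_sum (f := fun y => (∑ i, v i x * v i y)^2)
        (fun y _ => sq_nonneg _) (Finset.mem_univ x)
    have hTsw : ∑ x, ∑ y, (∑ i, v i x * v i y)^2 = T := by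
      rw [hTdef, ← swap4 (fun i x => v i x)]
    have hmono' := mul_le_mul_of_nonneg_left hmono (by linarith : (0:ℝ) ≤ (d:ℝ))
    rw [hTsw] at hmono'
    calc (n:ℝ)^2 ≤ (d:ℝ) * ∑ x, (∑ i, v i x * v i x)^2 := hcs
      _ ≤ (d:ℝ) * T := hmono'
  have hsR : s^2 ≤ (n:ℝ) * Rq := by
    have hcs := Finset.sum_mul_sq_le_sq_mul_sq Finset.univ (fun _ : Fin n => (1:ℝ)) p
    simp only [one_mul, one_pow] at hcs
    have hnn : ∑ i : Fin n, (1:ℝ) = (n:ℝ) := by simp [Finset.card_univ]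
    rw [hpsum, hnn, ← hRdef] at hcs
    exact hcs
  by_cases hcase : s * (d:ℝ) ≤ (n:ℝ)^2
  · -- case 1 : plain Cauchy-Schwarz suffices
    rw [hT] at hCS1
    have h3 : (a+b)*(s*(d:ℝ)) ≤ (a+b)*(n:ℝ)^2 := mul_le_mul_of_nonneg_left hcase hsum
    have h4 : (0:ℝ) ≤ (n:ℝ)^2*(((d:ℝ)-1)*(a+b)^2) :=
      mul_nonneg (sq_nonneg _) (mul_nonneg (by linarith) (sq_nonneg _))
    have hid1 : (n:ℝ)*((n:ℝ)*((2-a-b)^2 - (d:ℝ)*(b-a)^2) - (d:ℝ)*((2-a-b)^2-(b-a)^2))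
        = 4*((n:ℝ)^2 - (d:ℝ)*((n:ℝ)*(1-a)*(1-b) + (a+b)*s - a*b*(n:ℝ)^2))
          - 4*((a+b)*(n:ℝ)^2 - (a+b)*(s*(d:ℝ))) - (n:ℝ)^2*(((d:ℝ)-1)*(a+b)^2) := by ring
    have h2 : (n:ℝ) * ((n:ℝ) * ((2-a-b)^2 - (d:ℝ)*(b-a)^2)
        - (d:ℝ) * ((2-a-b)^2 - (b-a)^2)) ≤ 0 := by linarith only [hCS1, h3, h4, hid1]
    by_contra hc; push_neg at hc
    have h5 := mul_pos hN (sub_pos.mpr hc)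
    linarith only [h5, h2]
  · push_neg at hcase
    have hs : (0:ℝ) < s := by
      by_contra hcon
      push_neg at hcon
      nlinarith only [hcon, hcase, hN, hD1]
    have hd2 : (2:ℝ) ≤ (d:ℝ) := by
      by_contra h
      push_neg at h
      have hdeq : (d:ℝ) = 1 := by
        have h2 : d < 2 := by exact_mod_cast h
        have h3 : d = 1 := by omega
        rw [h3]; norm_num
      rw [hdeq] at hcase
      linarith only [hcase, hsN2]
    -- centered vectors
    set c : Fin n → Fin d → ℝ := fun i x => v i x - (p i / s) * w x with hcdef
    have hcw : ∀ i, ∑ x, c i x * w x = 0 := by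
      intro i
      have h1 : ∑ x, c i x * w x = (∑ x, v i x * w x) - (p i / s) * ∑ x, (w x)^2 := by
        simp only [hcdef, sub_mul, Finset.sum_sub_distrib, Finset.mul_sum]
        congr 1
        exact Finset.sum_congr rfl fun x _ => by ring
      rw [h1, ← hpx i, ← hsdef]
      field_simp
      ring
    have hHG : ∀ i j, (∑ x, c i x * c j x) = G i j - p i * p j / s := by
      intro i j
      have h1 : ∑ x, c i x * c j x
          = ∑ x, (v i x * v j x - (p i/s) * (v j x * w x) - (p j/s) * (v i x * w x)
              + (p i * p j/s^2) * (w x)^2) :=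
        Finset.sum_congr rfl fun x _ => by simp only [hcdef]; ring
      have h2 : ∑ x, (v i x * v j x - (p i/s) * (v j x * w x) - (p j/s) * (v i x * w x)
              + (p i * p j/s^2) * (w x)^2)
          = (∑ x, v i x * v j x) - (p i/s) * (∑ x, v j x * w x)
            - (p j/s) * (∑ x, v i x * w x) + (p i * p j/s^2) * (∑ x, (w x)^2) := by
        simp only [Finset.sum_add_distrib, Finset.sum_sub_distrib, ← Finset.mul_sum]
      rw [h1, h2, ← hGx i j, ← hpx j, ← hpx i, ← hsdef]
      field_simp
      ring
    -- main Cauchy-Schwarz with the projection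
    have hAH : ∑ x, ∑ y, (∑ i, c i x * c i y)^2 = ∑ i, ∑ j, (G i j - p i*p j/s)^2 := by
      rw [← swap4 c]
      exact Finset.sum_congr rfl fun i _ => Finset.sum_congr rfl fun j _ => by rw [hHG i j]
    have hXeq : ∑ i, (G i i - p i * p i / s) = (n:ℝ) - Rq/s := by
      simp only [Finset.sum_sub_distrib]
      congr 1
      · rw [Finset.sum_congr rfl fun i _ => hGdiag i]; simp [Finset.card_univ]
      · rw [hRdef, ← Finset.sum_div]
        congr 1
        exact Finset.sum_congr rfl fun i _ => by rw [sq]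
    have hAQ : ∑ x, ∑ y, (∑ i, c i x * c i y) * ((if x = y then (1:ℝ) else 0) - w x * w y / s)
        = (n:ℝ) - Rq/s := by
      have hsplit : ∀ x y, (∑ i, c i x * c i y) * ((if x = y then (1:ℝ) else 0) - w x * w y / s)
          = (∑ i, c i x * c i y) * (if x = y then (1:ℝ) else 0)
            - ((∑ i, c i x * c i y) * (w x * w y))/s := by
        intro x y; ring
      rw [Finset.sum_congr rfl fun x _ => Finset.sum_congr rfl fun y _ => hsplit x y]
      simp only [Finset.sum_sub_distrib]
      have hp1 : ∑ x, ∑ y, (∑ i, c i x * c i y) * (if x = y then (1:ℝ) else 0)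
          = ∑ x, ∑ i, c i x * c i x := by
        refine Finset.sum_congr rfl fun x _ => ?_
        simp [mul_ite, Finset.sum_ite_eq]
      have hp2 : ∑ x, ∑ y, ((∑ i, c i x * c i y) * (w x * w y))/s = 0 := by
        simp only [← Finset.sum_div]
        rw [show ∑ x, ∑ y, (∑ i, c i x * c i y) * (w x * w y) = ∑ i, (∑ x, w x * c i x)^2 from
          swap2 (fun x i => c i x) w]
        have : ∀ i : Fin n, (∑ x, w x * c i x) = 0 := by
          intro i
          rw [← hcw i]
          exact Finset.sum_congr rfl fun x _ => by ring
        rw [Finset.sum_congr rfl fun i _ => by rw [this i]]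
        simp
      rw [hp1, hp2, sub_zero, Finset.sum_comm]
      rw [Finset.sum_congr rfl fun i _ => by rw [show (∑ x, c i x * c i x) = G i i - p i * p i / s from hHG i i]]
      exact hXeq
    have hQQ : ∑ x, ∑ y, ((if x = y then (1:ℝ) else 0) - w x * w y / s)^2 = (d:ℝ) - 1 := by
      have hterm : ∀ x y : Fin d, ((if x = y then (1:ℝ) else 0) - w x * w y / s)^2
          = (if x = y then (1:ℝ) else 0) - 2*(if x = y then (w x * w y)/s else 0)
            + ((w x)^2 * (w y)^2)/s^2 := by
        intro x y
        by_cases hxy : x = y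
        · subst hxy; simp; field_simp; ring
        · simp [hxy]; field_simp
      rw [Finset.sum_congr rfl fun x _ => Finset.sum_congr rfl fun y _ => hterm x y]
      simp only [Finset.sum_add_distrib, Finset.sum_sub_distrib]
      have e1 : ∑ x : Fin d, ∑ y : Fin d, (if x = y then (1:ℝ) else 0) = (d:ℝ) := by
        simp [Finset.sum_ite_eq, Finset.card_univ]
      have e2 : ∑ x : Fin d, ∑ y : Fin d, (2:ℝ)*(if x = y then (w x * w y)/s else 0) = 2 := by
        have : ∀ x : Fin d, ∑ y : Fin d, (2:ℝ)*(if x = y then (w x * w y)/s else 0)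
            = 2*((w x)^2/s) := by
          intro x
          rw [← Finset.mul_sum, Finset.sum_ite_eq]
          simp [sq]
        rw [Finset.sum_congr rfl fun x _ => this x]
        rw [← Finset.mul_sum, ← Finset.sum_div, ← hsdef]
        field_simp
      have e3 : ∑ x : Fin d, ∑ y : Fin d, ((w x)^2 * (w y)^2)/s^2 = 1 := by
        simp only [← Finset.sum_div]
        rw [← Finset.sum_mul_sum]
        rw [← hsdef, ← pow_two]
        exact div_self (by positivity)
      rw [e1, e2, e3]
      ring
    have hCSmain : ((n:ℝ) - Rq/s)^2 ≤ ((d:ℝ) - 1) * (∑ i, ∑ j, (G i j - p i*p j/s)^2) := by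
      have hcs := Finset.sum_mul_sq_le_sq_mul_sq Finset.univ
        (fun q : Fin d × Fin d => ∑ i, c i q.1 * c i q.2)
        (fun q : Fin d × Fin d => (if q.1 = q.2 then (1:ℝ) else 0) - w q.1 * w q.2 / s)
      rw [Fintype.sum_prod_type, Fintype.sum_prod_type, Fintype.sum_prod_type] at hcs
      simp only at hcs
      rw [hAQ, hQQ, hAH] at hcs
      linarith only [hcs]
    -- expansion of the projected Gram norm
    set Kq : ℝ := ∑ i, ∑ j, G i j * (p i * p j) with hKqdef
    have hKq : Rq^2 ≤ Kq * s := by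
      have h1 : Kq = ∑ x, (∑ i, p i * v i x)^2 := by
        rw [hKqdef, ← swap2 (fun i x => v i x) p]
      have h2 : Rq = ∑ x, (∑ i, p i * v i x) * w x := by
        have : Rq = ∑ i, ∑ x, (p i * v i x) * w x := by
          rw [hRdef]
          refine Finset.sum_congr rfl fun i _ => ?_
          rw [sq, hpdef]
          rw [Finset.mul_sum]
          exact Finset.sum_congr rfl fun x _ => by ring
        rw [this, Finset.sum_comm]
        exact Finset.sum_congr rfl fun x _ => by rw [Finset.sum_mul]
      have hcs := Finset.sum_mul_sq_le_sq_mul_sq Finset.univ (fun x => ∑ i, p i * v i x) w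
      rw [← h2, ← h1] at hcs
      calc Rq^2 ≤ Kq * ∑ x, (w x)^2 := hcs
        _ = Kq * s := by rw [← hsdef]
    have hexp : ∑ i, ∑ j, (G i j - p i*p j/s)^2 = T - 2*Kq/s + Rq^2/s^2 := by
      have hterm : ∀ i j : Fin n, (G i j - p i*p j/s)^2
          = (G i j)^2 - (G i j * (p i * p j))*(2/s) + ((p i)^2 * (p j)^2)*(1/s^2) := by
        intro i j; field_simp; ring
      rw [Finset.sum_congr rfl fun i _ => Finset.sum_congr rfl fun j _ => hterm i j]
      simp only [Finset.sum_add_distrib, Finset.sum_sub_distrib, ← Finset.sum_mul]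
      rw [← hTdef, ← hKqdef, ← Finset.sum_mul_sum, ← hRdef]
      ring
    -- scalar endgame
    set ρ : ℝ := Rq / s with hρdef
    have hρ2 : Rq^2/s^2 = ρ^2 := by rw [hρdef, div_pow]
    have hκ : ρ^2 ≤ Kq/s := by
      rw [← hρ2, div_le_div_iff₀ (by positivity) hs]
      have h9 := mul_le_mul_of_nonneg_right hKq hs0
      linarith only [h9]
    have hCS2' : ((n:ℝ) - ρ)^2 + ((d:ℝ)-1)*ρ^2 ≤ ((d:ℝ)-1)*T := by
      rw [hexp, hρ2] at hCSmain
      have hint := mul_le_mul_of_nonneg_left hκ (by linarith : (0:ℝ) ≤ (d:ℝ)-1)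
      have hKs : 2*Kq/s = 2*(Kq/s) := by ring
      rw [hKs] at hCSmain
      linarith only [hCSmain, hint]
    have hρN : s ≤ ρ * (n:ℝ) := by
      have hRqs : Rq = ρ * s := by rw [hρdef]; field_simp
      by_contra hcon
      push_neg at hcon
      rw [hRqs] at hsR
      have h7 := mul_pos hs (sub_pos.mpr hcon)
      linarith only [h7, hsR]
    have hf2 : (0:ℝ) ≤ (d:ℝ)*(ρ*(n:ℝ)+s) - 2*(n:ℝ)^2 := by
      have := mul_le_mul_of_nonneg_left hρN (by linarith : (0:ℝ) ≤ (d:ℝ))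
      linarith only [this, hcase]
    have hprod : (0:ℝ) ≤ (ρ*(n:ℝ) - s) * ((d:ℝ)*(ρ*(n:ℝ)+s) - 2*(n:ℝ)^2) :=
      mul_nonneg (by linarith) hf2
    have hF : ((n:ℝ)^2 - s)^2 + ((d:ℝ)-1)*s^2 ≤ ((d:ℝ)-1)*(n:ℝ)^2*T := by
      have hCS2N := mul_le_mul_of_nonneg_left hCS2' (sq_nonneg (n:ℝ))
      have hidF : ((n:ℝ)^2-s)^2 + ((d:ℝ)-1)*s^2
          = (n:ℝ)^2*(((n:ℝ)-ρ)^2 + ((d:ℝ)-1)*ρ^2)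
            - (ρ*(n:ℝ)-s)*((d:ℝ)*(ρ*(n:ℝ)+s)-2*(n:ℝ)^2) := by ring
      linarith only [hCS2N, hprod, hidF]
    rw [hT] at hF
    have hF' : (0:ℝ) ≤ (d:ℝ)*((((d:ℝ)-1)*(n:ℝ)^2*((n:ℝ)*(1-a)*(1-b) + (a+b)*s - a*b*(n:ℝ)^2))
        - (((n:ℝ)^2-s)^2 + ((d:ℝ)-1)*s^2)) :=
      mul_nonneg (by linarith) (by linarith [hF])
    have hsq := sq_nonneg (2*(d:ℝ)*s - (n:ℝ)^2*(2+(a+b)*((d:ℝ)-1)))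
    have hidM : ((d:ℝ)-1)*(n:ℝ)^3*((n:ℝ)*((2-a-b)^2 - (d:ℝ)*(b-a)^2)
        - (d:ℝ)*((2-a-b)^2-(b-a)^2))
        = -4*((d:ℝ)*((((d:ℝ)-1)*(n:ℝ)^2*((n:ℝ)*(1-a)*(1-b) + (a+b)*s - a*b*(n:ℝ)^2))
            - (((n:ℝ)^2-s)^2 + ((d:ℝ)-1)*s^2)))
          - (2*(d:ℝ)*s - (n:ℝ)^2*(2+(a+b)*((d:ℝ)-1)))^2 := by ring
    have hmain : ((d:ℝ)-1)*(n:ℝ)^3*((n:ℝ)*((2-a-b)^2 - (d:ℝ)*(b-a)^2)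
        - (d:ℝ)*((2-a-b)^2-(b-a)^2)) ≤ 0 := by linarith only [hF', hsq, hidM]
    have hpos : (0:ℝ) < ((d:ℝ)-1)*(n:ℝ)^3 := by
      apply mul_pos (by linarith)
      positivity
    by_contra hc; push_neg at hc
    have h6 := mul_pos hpos (sub_pos.mpr hc)
    linarith only [h6, hmain]
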